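/- Let G be a finite nilpotent group and c(x,y) a word in the commutator subgroup of the free group F⟨x,y⟩. Then the equation x = c(x,y) has exactly |G| solutions in G², and the solution set is exactly {(1, g) : g ∈ G}. -/

import Mathlib

open scoped commutatorElement

/-- If `u` commutes with everything, then any word in the commutator subgroup of
`F₂` evaluates to `1` at `(u, v)`. -/
lemma key_lemma {H : Type*} [Group H] {u v : H} (hu : ∀ g : H, Commute u g)
    {c : FreeGroup (Fin 2)} (hc : c ∈ commutator (FreeGroup (Fin 2))) :
    FreeGroup.lift ![u, v] c = 1 := by
  set φ := (FreeGroup.lift ![u, v] : FreeGroup (Fin 2) →* H) with hφ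
  have h1 : φ c ∈ (commutator (FreeGroup (Fin 2))).map φ :=
    Subgroup.mem_map_of_mem φ hc
  have h2 : (commutator (FreeGroup (Fin 2))).map φ = ⁅φ.range, φ.range⁆ := by
    rw [commutator_def, Subgroup.map_commutator, ← MonoidHom.range_eq_map]
  have hvr : ∀ x ∈ φ.range, Commute v x := by
    intro x hx
    obtain ⟨w, rfl⟩ := hx
    induction w using FreeGroup.induction_on with
    | C1 => simp [Commute.one_right]
    | of i =>
      rw [show φ (FreeGroup.of i) = ![u, v] i from FreeGroup.lift_apply_of]
      fin_cases i
      · simpa using (hu v).symm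
      · simp
    | inv_of w h => simpa using h.inv_right
    | mul w₁ w₂ h1 h2 => simpa [map_mul] using h1.mul_right h2
  have hcomm : ∀ x ∈ φ.range, ∀ y ∈ φ.range, Commute x y := by
    intro x hx y hy
    obtain ⟨w, rfl⟩ := hx
    induction w using FreeGroup.induction_on with
    | C1 => simp [Commute.one_left]
    | of i =>
      rw [show φ (FreeGroup.of i) = ![u, v] i from FreeGroup.lift_apply_of]
      fin_cases i
      · simpa using hu y
      · simpa using hvr y hy
    | inv_of w h => simpa using h.inv_left
    | mul w₁ w₂ h1 h2 => simpa [map_mul] using h1.mul_left h2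
  have h3 : ⁅φ.range, φ.range⁆ = (⊥ : Subgroup H) := by
    rw [Subgroup.commutator_eq_bot_iff_le_centralizer]
    intro x hx
    rw [Subgroup.mem_centralizer_iff]
    intro y hy
    exact (hcomm x hx y hy).symm.eq
  rw [h2, h3] at h1
  exact Subgroup.mem_bot.mp h1

/-- For a finite nilpotent group `G` and a word `c(x,y)` in
the commutator subgroup of the free group on two generators, the equation
`x = c(x,y)` has exactly `|G|` solutions in `G²`, namely the pairs
`(1, g)` for `g ∈ G`. -/
theorem stmt_10 (G : Type*) [Group G] [Finite G] [Group.IsNilpotent G]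
    (c : FreeGroup (Fin 2)) (hc : c ∈ commutator (FreeGroup (Fin 2))) :
    Nat.card {p : G × G // p.1 = FreeGroup.lift ![p.1, p.2] c} = Nat.card G ∧
      {p : G × G | p.1 = FreeGroup.lift ![p.1, p.2] c} =
        {p : G × G | p.1 = 1} := by
  have heq : ∀ p : G × G, (p.1 = FreeGroup.lift ![p.1, p.2] c) ↔ p.1 = 1 := by
    intro p
    constructor
    · intro hp
      have hmem : ∀ k, p.1 ∈ (⊤ : Subgroup G).lowerCentralSeries k := by
        intro k
        induction k with
        | zero => simp [Subgroup.lowerCentralSeries_zero]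
        | succ k ih =>
          set N := (⊤ : Subgroup G).lowerCentralSeries (k + 1) with hN
          let π : G →* G ⧸ N := QuotientGroup.mk' N
          have hcentral : ∀ g : G ⧸ N, Commute (π p.1) g := by
            intro g
            obtain ⟨g, rfl⟩ := QuotientGroup.mk'_surjective N g
            have hmemc : ⁅p.1, g⁆ ∈ N := by
              rw [hN, Subgroup.lowerCentralSeries_succ]
              exact Subgroup.commutator_mem_commutator ih (Subgroup.mem_top g)
            have : π ⁅p.1, g⁆ = 1 := (QuotientGroup.eq_one_iff _).mpr hmemc
            rw [map_commutatorElement] at this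
            exact commutatorElement_eq_one_iff_commute.mp this
          have hkey : FreeGroup.lift ![π p.1, π p.2] c = 1 := key_lemma hcentral hc
          have hcomp : (FreeGroup.lift ![π p.1, π p.2] : FreeGroup (Fin 2) →* G ⧸ N)
              = π.comp (FreeGroup.lift ![p.1, p.2]) := by
            apply FreeGroup.ext_hom
            intro i
            fin_cases i <;> simp
          have : π p.1 = 1 := by
            rw [hp]
            have := congrArg (fun f : FreeGroup (Fin 2) →* G ⧸ N => f c) hcomp
            simp only [MonoidHom.comp_apply] at this
            rw [← this, hkey]
          exact (QuotientGroup.eq_one_iff _).mp this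
      obtain ⟨n, hn⟩ := nilpotent_iff_lowerCentralSeries.mp ‹Group.IsNilpotent G›
      have := hmem n
      rw [hn, Subgroup.mem_bot] at this
      exact this
    · intro hp
      have hu : ∀ g : G, Commute (1 : G) g := fun g => Commute.one_left g
      have h := key_lemma (v := p.2) hu hc
      rw [hp]
      exact h.symm
  constructor
  · refine Nat.card_congr ?_
    refine (Equiv.subtypeEquivRight heq).trans ?_
    exact ⟨fun p => p.1.2, fun g => ⟨(1, g), rfl⟩, fun p => Subtype.ext (Prod.ext p.2.symm rfl), fun g => rfl⟩
  · ext p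
    exact heq p
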